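/- arXiv:math/0603313 — 5 statements merged into one kernel-verified Lean document; each statement's English description precedes it below -/
import Mathlib

section
/- A symmetric polynomial matrix S(x) admits a factorization S(x) = T(x)ᵀ T(x) with T a polynomial matrix if and only if the scalar polynomial yᵀ S(x) y is a sum of squares in the combined variables (x, y). -/
open MvPolynomial

private noncomputable def eAux (n m : ℕ) : MvPolynomial (Fin n ⊕ Fin m) ℝ ≃ₐ[ℝ]
    MvPolynomial (Fin m) (MvPolynomial (Fin n) ℝ) :=
  (renameEquiv ℝ (Equiv.sumComm (Fin n) (Fin m))).trans (sumAlgEquiv ℝ (Fin m) (Fin n))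

private lemma eAux_X (n m : ℕ) (j : Fin m) : eAux n m (X (Sum.inr j)) = X j := by
  simp [eAux, sumAlgEquiv_X_inl]

private lemma eAux_rename (n m : ℕ) (p : MvPolynomial (Fin n) ℝ) :
    eAux n m (rename Sum.inl p) = C p := by
  have h2 := DFunLike.congr_fun
    (sumAlgEquiv_comp_rename_inr (R := ℝ) (S₁ := Fin m) (S₂ := Fin n)) p
  simp only [AlgHom.comp_apply, AlgEquiv.toAlgHom_eq_coe, AlgHom.coe_coe,
    IsScalarTower.coe_toAlgHom'] at h2
  have h3 : (rename ⇑(Equiv.sumComm (Fin n) (Fin m))) ((rename Sum.inl) p)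
      = rename Sum.inr p := by rw [rename_rename]; rfl
  rw [eAux, AlgEquiv.trans_apply, renameEquiv_apply, h3]
  exact h2

private lemma sos_zero {n N : ℕ} (a : Fin N → MvPolynomial (Fin n) ℝ)
    (h : ∑ l, (a l) ^ 2 = 0) (l : Fin N) : a l = 0 := by
  apply MvPolynomial.funext
  intro v
  have hv : ∑ l, (eval v (a l)) ^ 2 = 0 := by
    have := congrArg (eval v) h
    simpa using this
  have := (Finset.sum_eq_zero_iff_of_nonneg
    (fun i _ => sq_nonneg (eval v (a i)))).mp hv l (Finset.mem_univ l)
  simpa using pow_eq_zero_iff (n := 2) (by norm_num) |>.mp this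

private lemma cc_pderiv_sq {σ R : Type*} [CommRing R] (i j : σ) (g : MvPolynomial σ R)
    (hg : constantCoeff g = 0) :
    constantCoeff (pderiv i (pderiv j (g ^ 2))) =
      2 * constantCoeff (pderiv i g) * constantCoeff (pderiv j g) := by
  rw [sq, pderiv_mul, map_add, pderiv_mul, pderiv_mul]
  simp [map_add, map_mul, hg]
  ring

private lemma cc_pderiv_term {σ R : Type*} [CommRing R] [DecidableEq σ] (i j a b : σ) (c : R) :
    constantCoeff (pderiv i (pderiv j ((X a : MvPolynomial σ R) * C c * X b))) =
      (if a = j ∧ b = i then c else 0) + (if b = j ∧ a = i then c else 0) := by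
  simp [pderiv_mul, pderiv_X, Pi.single_apply, mul_add, add_mul, apply_ite (pderiv i),
    apply_ite constantCoeff, apply_ite (pderiv j)]
  split_ifs <;> simp_all

/-- A symmetric polynomial matrix `S(x)` factors as `S(x) = T(x)ᵀ T(x)` for some
polynomial matrix `T` if and only if the scalar polynomial `yᵀ S(x) y` (a polynomial
in the combined variables `(x, y)`) is a sum of squares. The combined polynomial
ring is `ℝ[x,y]` with variables indexed by `Fin n ⊕ Fin m`; `x`-variables are
injected via `Sum.inl` and `y j = X (Sum.inr j)`. -/
theorem sos_matrix_iff_factorization {n m : ℕ}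
    (S : Matrix (Fin m) (Fin m) (MvPolynomial (Fin n) ℝ))
    (hsymm : S.transpose = S) :
    (∃ (p : ℕ) (T : Matrix (Fin p) (Fin m) (MvPolynomial (Fin n) ℝ)),
        S = T.transpose * T) ↔
      ∃ (N : ℕ) (f : Fin N → MvPolynomial (Fin n ⊕ Fin m) ℝ),
        (∑ i, ∑ j,
            (MvPolynomial.X (Sum.inr i) : MvPolynomial (Fin n ⊕ Fin m) ℝ) *
              MvPolynomial.rename Sum.inl (S i j) * MvPolynomial.X (Sum.inr j)) =
          ∑ l, (f l) ^ 2 := by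
  constructor
  · rintro ⟨p, T, rfl⟩
    refine ⟨p, fun l => ∑ j, rename Sum.inl (T l j) * X (Sum.inr j), ?_⟩
    have hsq : ∀ l : Fin p,
        (∑ j, rename Sum.inl (T l j) * X (Sum.inr j)) ^ 2 =
          ∑ i, ∑ j, (X (Sum.inr i) : MvPolynomial (Fin n ⊕ Fin m) ℝ) *
            rename Sum.inl (T l i * T l j) * X (Sum.inr j) := by
      intro l
      rw [sq, Finset.sum_mul_sum]
      refine Finset.sum_congr rfl fun i _ => Finset.sum_congr rfl fun j _ => ?_
      rw [map_mul]; ring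
    calc (∑ i, ∑ j, (X (Sum.inr i) : MvPolynomial (Fin n ⊕ Fin m) ℝ) *
            rename Sum.inl ((T.transpose * T) i j) * X (Sum.inr j))
        = ∑ i, ∑ j, ∑ l, (X (Sum.inr i) : MvPolynomial (Fin n ⊕ Fin m) ℝ) *
            rename Sum.inl (T l i * T l j) * X (Sum.inr j) := by
          refine Finset.sum_congr rfl fun i _ => Finset.sum_congr rfl fun j _ => ?_
          simp [Matrix.mul_apply, Matrix.transpose_apply, Finset.sum_mul, Finset.mul_sum]
      _ = ∑ i, ∑ l, ∑ j, (X (Sum.inr i) : MvPolynomial (Fin n ⊕ Fin m) ℝ) *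
            rename Sum.inl (T l i * T l j) * X (Sum.inr j) :=
          Finset.sum_congr rfl fun i _ => Finset.sum_comm
      _ = ∑ l, ∑ i, ∑ j, (X (Sum.inr i) : MvPolynomial (Fin n ⊕ Fin m) ℝ) *
            rename Sum.inl (T l i * T l j) * X (Sum.inr j) :=
          Finset.sum_comm
      _ = ∑ l, (∑ j, rename Sum.inl (T l j) * X (Sum.inr j)) ^ 2 := by
          exact Finset.sum_congr rfl fun l _ => (hsq l).symm
  · rintro ⟨N, f, hf⟩
    set g : Fin N → MvPolynomial (Fin m) (MvPolynomial (Fin n) ℝ) :=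
      fun l => eAux n m (f l) with hg
    have key : (∑ i, ∑ j, (X i : MvPolynomial (Fin m) (MvPolynomial (Fin n) ℝ)) *
        C (S i j) * X j) = ∑ l, (g l) ^ 2 := by
      have := congrArg (eAux n m) hf
      simpa [map_sum, map_mul, map_pow, eAux_X, eAux_rename] using this
    have hcc : ∀ l, constantCoeff (g l) = 0 := by
      apply sos_zero
      have := congrArg constantCoeff key
      simpa [map_sum, map_mul, map_pow] using this.symm
    refine ⟨N, fun l j => constantCoeff (pderiv j (g l)), Matrix.ext fun i j => ?_⟩
    have h2 := congrArg (fun q => constantCoeff (pderiv i (pderiv j q))) key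
    simp only [map_sum] at h2
    have hL : (∑ a, ∑ b, constantCoeff (pderiv i (pderiv j
        ((X a : MvPolynomial (Fin m) (MvPolynomial (Fin n) ℝ)) * C (S a b) * X b)))) =
        2 * S i j := by
      have hs : S j i = S i j := by
        have := congrFun (congrFun hsymm i) j
        simpa [Matrix.transpose] using this
      have e1 : (∑ a : Fin m, ∑ b : Fin m,
          if a = j ∧ b = i then S a b else 0) = S j i := by
        have h1 : ∀ a : Fin m, (∑ b : Fin m, if a = j ∧ b = i then S a b else 0)
            = if a = j then S a i else 0 := by
          intro a; by_cases h : a = j <;> simp [h]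
        simp [h1]
      have e2 : (∑ a : Fin m, ∑ b : Fin m,
          if b = j ∧ a = i then S a b else 0) = S i j := by
        have h1 : ∀ a : Fin m, (∑ b : Fin m, if b = j ∧ a = i then S a b else 0)
            = if a = i then S a j else 0 := by
          intro a; by_cases h : a = i <;> simp [h]
        simp [h1]
      simp only [cc_pderiv_term, Finset.sum_add_distrib]
      rw [e1, e2, hs]; ring
    have hR : (∑ l, constantCoeff (pderiv i (pderiv j ((g l) ^ 2)))) =
        2 * ∑ l, constantCoeff (pderiv i (g l)) * constantCoeff (pderiv j (g l)) := by
      rw [Finset.mul_sum]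
      exact Finset.sum_congr rfl fun l _ => by
        rw [cc_pderiv_sq i j (g l) (hcc l)]; ring
    have h3 : 2 * S i j = 2 * ∑ l, constantCoeff (pderiv i (g l)) *
        constantCoeff (pderiv j (g l)) := by
      rw [← hL, ← hR]; exact h2
    have h2ne : (2 : MvPolynomial (Fin n) ℝ) ≠ 0 := two_ne_zero
    have h4 := mul_left_cancel₀ h2ne h3
    rw [h4]
    exact Finset.sum_congr rfl fun l _ => rfl
end

section
/- Suppose M(x) is symmetric with M(x) ⪰ εI for all x and R(x) = Df(x)ᵀM(x) + M(x)Df(x) + Ṁ(x) satisfies R(x) ⪯ −βM(x) for all x, with β > 0. Then for any solution x(t) of ẋ = f(x) and any solution δx of the variational equation, δx(t)ᵀ M(x(t)) δx(t) ≤ e^{−βt} δx(0)ᵀ M(x(0)) δx(0). -/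
open Matrix

lemma dp_expand' {n : ℕ} (u : Fin n → ℝ) (B : Matrix (Fin n) (Fin n) ℝ) (w : Fin n → ℝ) :
    dotProduct u (B.mulVec w) = ∑ i, ∑ j, u i * B i j * w j := by
  simp [dotProduct, mulVec, Finset.mul_sum, mul_assoc]

/-- If `M(x) ⪰ εI` and the contraction matrix
`R(x) = Df(x)ᵀ M(x) + M(x) Df(x) + Ṁ(x)` satisfies `R(x) ⪯ -β M(x)` for all `x`
(with `ε, β > 0`), then along any solution `x(t)` of `ẋ = f(x)` and any solution
`δx` of the variational equation, `δxᵀ M(x(t)) δx ≤ e^{-βt} δx(0)ᵀ M(x(0)) δx(0)`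
for `t ≥ 0`. -/
theorem contraction_metric_decay {n : ℕ} (f : (Fin n → ℝ) → (Fin n → ℝ))
    (M : (Fin n → ℝ) → Matrix (Fin n) (Fin n) ℝ)
    (hf : ContDiff ℝ 1 f) (hM : ∀ i j, ContDiff ℝ 1 fun z => M z i j)
    (hMsymm : ∀ z, (M z).transpose = M z)
    (ε β : ℝ) (hε : 0 < ε) (hβ : 0 < β)
    (J : (Fin n → ℝ) → Matrix (Fin n) (Fin n) ℝ)
    (Mdot R : (Fin n → ℝ) → Matrix (Fin n) (Fin n) ℝ)
    (hJ : ∀ z i j, J z i j = fderiv ℝ f z (Pi.single j 1) i)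
    (hMdot : ∀ z i j, Mdot z i j = fderiv ℝ (fun w => M w i j) z (f z))
    (hR : ∀ z, R z = (J z).transpose * M z + M z * J z + Mdot z)
    (hMpos : ∀ (z : Fin n → ℝ) (v : Fin n → ℝ),
      ε * dotProduct v v ≤ dotProduct v ((M z).mulVec v))
    (hRneg : ∀ (z : Fin n → ℝ) (v : Fin n → ℝ),
      dotProduct v ((R z).mulVec v) ≤ -β * dotProduct v ((M z).mulVec v))
    (x δ : ℝ → (Fin n → ℝ))
    (hx : ∀ t, HasDerivAt x (f (x t)) t)
    (hδ : ∀ t, HasDerivAt δ ((J (x t)).mulVec (δ t)) t) :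
    ∀ t : ℝ, 0 ≤ t →
      dotProduct (δ t) ((M (x t)).mulVec (δ t))
        ≤ Real.exp (-β * t) * dotProduct (δ 0) ((M (x 0)).mulVec (δ 0)) := by
  have hδ' : ∀ (t : ℝ) (i : Fin n),
      HasDerivAt (fun s => δ s i) ((J (x t)).mulVec (δ t) i) t :=
    fun t i => (hasDerivAt_pi.mp (hδ t)) i
  have hMt : ∀ (t : ℝ) (i j : Fin n),
      HasDerivAt (fun s => M (x s) i j) (Mdot (x t) i j) t := by
    intro t i j
    have h1 : HasFDerivAt (fun w => M w i j) (fderiv ℝ (fun w => M w i j) (x t)) (x t) :=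
      (((hM i j).differentiable one_ne_zero) (x t)).hasFDerivAt
    have h2 := h1.comp_hasDerivAt t (hx t)
    rw [hMdot]
    exact h2
  set V : ℝ → ℝ := fun t => dotProduct (δ t) ((M (x t)).mulVec (δ t)) with hVdef
  have hV : ∀ t, HasDerivAt V (dotProduct (δ t) ((R (x t)).mulVec (δ t))) t := by
    intro t
    have key : ∀ i j : Fin n, HasDerivAt (fun s => δ s i * M (x s) i j * δ s j)
        ((J (x t)).mulVec (δ t) i * M (x t) i j * δ t j
          + δ t i * Mdot (x t) i j * δ t j
          + δ t i * M (x t) i j * (J (x t)).mulVec (δ t) j) t := by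
      intro i j
      have h := ((hδ' t i).fun_mul (hMt t i j)).fun_mul (hδ' t j)
      refine h.congr_deriv ?_
      ring
    have hsum : HasDerivAt (fun s => ∑ i, ∑ j, δ s i * M (x s) i j * δ s j)
        (∑ i, ∑ j, ((J (x t)).mulVec (δ t) i * M (x t) i j * δ t j
          + δ t i * Mdot (x t) i j * δ t j
          + δ t i * M (x t) i j * (J (x t)).mulVec (δ t) j)) t :=
      HasDerivAt.fun_sum (fun i _ => HasDerivAt.fun_sum (fun j _ => key i j))
    have hVeq : V = fun s => ∑ i, ∑ j, δ s i * M (x s) i j * δ s j := by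
      funext s; simp [hVdef, dp_expand']
    rw [hVeq]
    convert hsum using 1
    -- derivative value identity
    have e1 : dotProduct (δ t) (((J (x t)).transpose * M (x t)).mulVec (δ t))
        = dotProduct ((J (x t)).mulVec (δ t)) ((M (x t)).mulVec (δ t)) := by
      rw [← Matrix.mulVec_mulVec, Matrix.dotProduct_mulVec, Matrix.vecMul_transpose]
    have e2 : dotProduct (δ t) ((M (x t) * J (x t)).mulVec (δ t))
        = dotProduct (δ t) ((M (x t)).mulVec ((J (x t)).mulVec (δ t))) := by
      rw [← Matrix.mulVec_mulVec]
    rw [hR, Matrix.add_mulVec, Matrix.add_mulVec, dotProduct_add, dotProduct_add,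
      e1, e2, dp_expand', dp_expand', dp_expand']
    rw [← Finset.sum_add_distrib, ← Finset.sum_add_distrib]
    refine Finset.sum_congr rfl fun i _ => ?_
    rw [← Finset.sum_add_distrib, ← Finset.sum_add_distrib]
    exact Finset.sum_congr rfl fun j _ => by ring
  intro t ht
  set g : ℝ → ℝ := fun t => Real.exp (β * t) * V t with hgdef
  have hg : ∀ s, HasDerivAt g (Real.exp (β * s) * β * V s
      + Real.exp (β * s) * dotProduct (δ s) ((R (x s)).mulVec (δ s))) s := by
    intro s
    have h1 : HasDerivAt (fun u : ℝ => β * u) β s := by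
      simpa using (hasDerivAt_id s).const_mul β
    exact h1.exp.mul (hV s)
  have hgdiff : Differentiable ℝ g := fun s => (hg s).differentiableAt
  have hgd : ∀ s, deriv g s ≤ 0 := by
    intro s
    rw [(hg s).deriv]
    have hD := hRneg (x s) (δ s)
    have hpos : (0:ℝ) < Real.exp (β * s) := Real.exp_pos _
    nlinarith [mul_le_mul_of_nonneg_left hD hpos.le]
  have hanti : Antitone g := antitone_of_deriv_nonpos hgdiff hgd
  have h2 : Real.exp (β * t) * V t ≤ V 0 := by
    have := hanti ht
    simpa [hgdef] using this
  have h3 : Real.exp (-β * t) * (Real.exp (β * t) * V t) ≤ Real.exp (-β * t) * V 0 :=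
    mul_le_mul_of_nonneg_left h2 (Real.exp_pos _).le
  have h4 : -β * t + β * t = 0 := by ring
  rw [← mul_assoc, ← Real.exp_add, h4, Real.exp_zero, one_mul] at h3
  exact h3
end

section
/- Let f : ℝⁿ → ℝⁿ be C¹ with f(0) = 0, and let M(x) be a C¹ symmetric matrix function with M(x) ⪰ εI and R(x) = DfᵀM + MDf + Ṁ ⪯ −βM for all x, where ε, β > 0. Then V(x) = f(x)ᵀ M(x) f(x) satisfies V(x) > 0 for x with f(x) ≠ 0, and along trajectories of ẋ = f(x), V̇(x) ≤ −βV(x). -/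
open Matrix

/-- If `f(0) = 0`, `M(x) ⪰ εI`, and `R(x) = DfᵀM + MDf + Ṁ ⪯ -βM` for all `x`
(with `ε, β > 0`), then `V(x) = f(x)ᵀ M(x) f(x)` is positive wherever `f(x) ≠ 0`,
and along every trajectory of `ẋ = f(x)` its derivative satisfies `V̇ ≤ -βV`. -/
theorem contraction_metric_gives_lyapunov {n : ℕ}
    (f : (Fin n → ℝ) → (Fin n → ℝ))
    (M : (Fin n → ℝ) → Matrix (Fin n) (Fin n) ℝ)
    (hf : ContDiff ℝ 1 f) (hf0 : f 0 = 0)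
    (hM : ∀ i j, ContDiff ℝ 1 fun z => M z i j)
    (hMsymm : ∀ z, (M z).transpose = M z)
    (ε β : ℝ) (hε : 0 < ε) (hβ : 0 < β)
    (J Mdot R : (Fin n → ℝ) → Matrix (Fin n) (Fin n) ℝ)
    (hJ : ∀ z i j, J z i j = fderiv ℝ f z (Pi.single j 1) i)
    (hMdot : ∀ z i j, Mdot z i j = fderiv ℝ (fun w => M w i j) z (f z))
    (hR : ∀ z, R z = (J z).transpose * M z + M z * J z + Mdot z)
    (hMpos : ∀ (z v : Fin n → ℝ), ε * dotProduct v v ≤ dotProduct v ((M z).mulVec v))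
    (hRneg : ∀ (z v : Fin n → ℝ),
      dotProduct v ((R z).mulVec v) ≤ -β * dotProduct v ((M z).mulVec v))
    (V : (Fin n → ℝ) → ℝ)
    (hV : ∀ z, V z = dotProduct (f z) ((M z).mulVec (f z))) :
    (∀ z, f z ≠ 0 → 0 < V z) ∧
    (∀ x : ℝ → (Fin n → ℝ), (∀ t, HasDerivAt x (f (x t)) t) →
      ∀ t : ℝ, deriv (fun s => V (x s)) t ≤ -β * V (x t)) := by
  constructor
  · intro z hz
    have hpos : 0 < dotProduct (f z) (f z) := by
      rcases lt_or_eq_of_le (Finset.sum_nonneg fun i _ => mul_self_nonneg (f z i)) with h | h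
      · exact h
      · exact absurd (dotProduct_self_eq_zero.mp h.symm) hz
    calc 0 < ε * dotProduct (f z) (f z) := by positivity
    _ ≤ dotProduct (f z) ((M z).mulVec (f z)) := hMpos z (f z)
    _ = V z := (hV z).symm
  · intro x hx t
    set z := x t with hz
    set v := f z with hvdef
    -- derivative of components of f ∘ x
    have hfd : HasFDerivAt f (fderiv ℝ f z) z :=
      (hf.differentiable one_ne_zero z).hasFDerivAt
    have hfx : HasDerivAt (fun s => f (x s)) (fderiv ℝ f z v) t :=
      hfd.comp_hasDerivAt t (hx t)
    have hJv : fderiv ℝ f z v = (J z).mulVec v := by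
      conv_lhs => rw [pi_eq_sum_univ v]
      rw [map_sum]
      funext i
      rw [Finset.sum_apply]
      simp only [Matrix.mulVec, dotProduct, hJ]
      refine Finset.sum_congr rfl fun j _ => ?_
      have : (fun k => if j = k then (1:ℝ) else 0) = Pi.single j (1:ℝ) := by
        funext k; simp [Pi.single_apply, eq_comm]
      rw [this, (fderiv ℝ f z).map_smul]
      simp [mul_comm]
    have hfxi : ∀ i, HasDerivAt (fun s => f (x s) i) ((J z).mulVec v i) t := by
      intro i
      have := (hasDerivAt_pi.mp hfx) i
      rwa [hJv] at this
    have hMij : ∀ i j, HasDerivAt (fun s => M (x s) i j) (Mdot z i j) t := by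
      intro i j
      have h1 : HasFDerivAt (fun w => M w i j) (fderiv ℝ (fun w => M w i j) z) z :=
        ((hM i j).differentiable one_ne_zero z).hasFDerivAt
      have := h1.comp_hasDerivAt t (hx t)
      rwa [← hMdot] at this
    -- V ∘ x as a double sum
    have hVsum : (fun s => V (x s)) =
        fun s => ∑ i, ∑ j, f (x s) i * (M (x s) i j * f (x s) j) := by
      funext s
      simp only [hV, dotProduct, Matrix.mulVec, Finset.mul_sum]
    have hD : HasDerivAt (fun s => V (x s))
        (∑ i, ∑ j, ((J z).mulVec v i * (M z i j * v j) +
          v i * (Mdot z i j * v j + M z i j * (J z).mulVec v j))) t := by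
      rw [hVsum]
      exact HasDerivAt.fun_sum fun i _ => HasDerivAt.fun_sum fun j _ =>
        (hfxi i).mul ((hMij i j).mul (hfxi j))
    have hDval : (∑ i, ∑ j, ((J z).mulVec v i * (M z i j * v j) +
          v i * (Mdot z i j * v j + M z i j * (J z).mulVec v j)))
        = dotProduct v ((R z).mulVec v) := by
      have e1 : (∑ i, ∑ j, (J z).mulVec v i * (M z i j * v j))
          = dotProduct ((J z).mulVec v) ((M z).mulVec v) := by
        simp only [dotProduct, Matrix.mulVec, Finset.mul_sum]
      have e2 : (∑ i, ∑ j, v i * (Mdot z i j * v j))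
          = dotProduct v ((Mdot z).mulVec v) := by
        simp only [dotProduct, Matrix.mulVec, Finset.mul_sum]
      have e3 : (∑ i, ∑ j, v i * (M z i j * (J z).mulVec v j))
          = dotProduct v ((M z).mulVec ((J z).mulVec v)) := by
        simp only [dotProduct, Matrix.mulVec, Finset.mul_sum]
      have split : (∑ i, ∑ j, ((J z).mulVec v i * (M z i j * v j) +
            v i * (Mdot z i j * v j + M z i j * (J z).mulVec v j)))
          = (∑ i, ∑ j, (J z).mulVec v i * (M z i j * v j))
            + ((∑ i, ∑ j, v i * (Mdot z i j * v j))
            + (∑ i, ∑ j, v i * (M z i j * (J z).mulVec v j))) := by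
        simp only [mul_add, Finset.sum_add_distrib]
      rw [split, e1, e2, e3, hR, Matrix.add_mulVec, Matrix.add_mulVec,
        dotProduct_add, dotProduct_add,
        ← Matrix.mulVec_mulVec, ← Matrix.mulVec_mulVec,
        Matrix.dotProduct_mulVec v ((J z).transpose), Matrix.vecMul_transpose]
      ring
    rw [hD.deriv, hDval, hV]
    exact hRneg z v
end

section
/- For the Van der Pol system f(x₁,x₂) = (x₂, −α(x₁² + k)x₂ − ω²x₁) with α > 0, ω ≠ 0, there is no constant symmetric matrix M such that M ≻ 0 and DfᵀM + MDf ≺ 0 for all (x₁,x₂) ∈ ℝ². -/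
open Matrix

/-- For the Van der Pol system `f(x₁,x₂) = (x₂, -α(x₁²+k)x₂ - ω²x₁)` with `α > 0`
and `ω ≠ 0`, there is no constant symmetric matrix `M = [[a,b],[b,c]]` with
`M ≻ 0` and `Df(x)ᵀM + MDf(x) ≺ 0` for all `(x₁,x₂) ∈ ℝ²`. -/
theorem vdp_no_constant_contraction_metric (α ω k : ℝ) (hα : 0 < α) (hω : ω ≠ 0) :
    ¬ ∃ a b c : ℝ,
      (!![a, b; b, c] : Matrix (Fin 2) (Fin 2) ℝ).PosDef ∧
      ∀ x₁ x₂ : ℝ, ∀ v : Fin 2 → ℝ, v ≠ 0 →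
        dotProduct v
          ((((!![0, 1; -ω ^ 2 - 2 * α * x₁ * x₂, -α * (x₁ ^ 2 + k)] :
              Matrix (Fin 2) (Fin 2) ℝ)).transpose * !![a, b; b, c] +
            !![a, b; b, c] *
              !![0, 1; -ω ^ 2 - 2 * α * x₁ * x₂, -α * (x₁ ^ 2 + k)]).mulVec v) < 0 := by
  rintro ⟨a, b, c, hM, h⟩
  have hv : (![1, 0] : Fin 2 → ℝ) ≠ 0 := by
    intro hv
    have := congrFun hv 0
    simp at this
  have hω2 : 0 < ω ^ 2 := by positivity
  rcases le_or_gt 0 b with hb | hb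
  · have := h 1 (-(ω ^ 2) / α) ![1, 0] hv
    simp [dotProduct, mulVec, Matrix.mul_apply, Fin.sum_univ_two, Matrix.transpose_apply,
      Matrix.vecHead, Matrix.vecTail] at this
    have hx : 2 * α * 1 * (-(ω ^ 2) / α) = -2 * ω ^ 2 := by
      field_simp
    nlinarith [this, hx]
  · have := h 1 0 ![1, 0] hv
    simp [dotProduct, mulVec, Matrix.mul_apply, Fin.sum_univ_two, Matrix.transpose_apply,
      Matrix.vecHead, Matrix.vecTail] at this
    nlinarith [this]
end

section
/- For the driven Van der Pol system ẏ₁ = y₂, ẏ₂ = −α(y₁² + k + η)y₂ − ω²y₁ + αη x₂(t), with α > 0, k + η ≥ 0, ω ≠ 0, the matrix M(y₁) = [[ω² + α²(y₁² + k + η)², α(y₁² + k + η)], [α(y₁² + k + η), 1]] is positive definite for all y₁, and R = Ṁ + DfᵀM + MDf = [[−2αω²(y₁² + k + η), 0], [0, 0]], which is negative semidefinite. -/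
open Matrix

/-- For the driven Van der Pol system `ẏ₁ = y₂`,
`ẏ₂ = -α(y₁²+k+η)y₂ - ω²y₁ + αη x₂(t)` with `α > 0`, `k + η ≥ 0`, `ω ≠ 0`,
the metric `M(y₁) = [[ω² + α²(y₁²+k+η)², α(y₁²+k+η)], [α(y₁²+k+η), 1]]` is
positive definite, and `R = Ṁ + DfᵀM + MDf = [[-2αω²(y₁²+k+η), 0], [0, 0]]`,
which is negative semidefinite. Here `Df = [[0,1],[-ω²-2αy₁y₂, -α(y₁²+k+η)]]`
and `Ṁ = (∂M/∂y₁)·y₂`. -/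
theorem vdp_driven_semicontracting (α k η ω : ℝ)
    (hα : 0 < α) (hkη : 0 ≤ k + η) (hω : ω ≠ 0) :
    ∀ y₁ y₂ : ℝ,
      (!![ω ^ 2 + (α * (y₁ ^ 2 + k + η)) ^ 2, α * (y₁ ^ 2 + k + η);
          α * (y₁ ^ 2 + k + η), 1] : Matrix (Fin 2) (Fin 2) ℝ).PosDef ∧
      ((!![2 * (α * (y₁ ^ 2 + k + η)) * (2 * α * y₁) * y₂, 2 * α * y₁ * y₂;
           2 * α * y₁ * y₂, 0] : Matrix (Fin 2) (Fin 2) ℝ) +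
         (!![0, 1; -ω ^ 2 - 2 * α * y₁ * y₂, -α * (y₁ ^ 2 + k + η)] :
             Matrix (Fin 2) (Fin 2) ℝ).transpose *
           !![ω ^ 2 + (α * (y₁ ^ 2 + k + η)) ^ 2, α * (y₁ ^ 2 + k + η);
              α * (y₁ ^ 2 + k + η), 1] +
         !![ω ^ 2 + (α * (y₁ ^ 2 + k + η)) ^ 2, α * (y₁ ^ 2 + k + η);
            α * (y₁ ^ 2 + k + η), 1] *
           !![0, 1; -ω ^ 2 - 2 * α * y₁ * y₂, -α * (y₁ ^ 2 + k + η)]) =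
        !![-2 * α * ω ^ 2 * (y₁ ^ 2 + k + η), 0; 0, 0] ∧
      ∀ v : Fin 2 → ℝ,
        dotProduct v
          ((!![-2 * α * ω ^ 2 * (y₁ ^ 2 + k + η), 0; 0, 0] :
              Matrix (Fin 2) (Fin 2) ℝ).mulVec v) ≤ 0 := by
  intro y₁ y₂
  have hq : 0 ≤ y₁ ^ 2 + k + η := by nlinarith [sq_nonneg y₁]
  set b : ℝ := α * (y₁ ^ 2 + k + η) with hb
  have hbnn : 0 ≤ b := mul_nonneg hα.le hq
  refine ⟨?_, ?_, ?_⟩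
  · refine Matrix.posDef_iff_dotProduct_mulVec.mpr ⟨?_, ?_⟩
    · unfold Matrix.IsHermitian
      ext i j
      fin_cases i <;> fin_cases j <;>
        simp [Matrix.conjTranspose, Matrix.vecHead, Matrix.vecTail]
    · intro v hv
      have h0 : star v = v := by ext i; simp
      rw [h0]
      have hexp : dotProduct v
          ((!![ω ^ 2 + b ^ 2, b; b, 1] : Matrix (Fin 2) (Fin 2) ℝ).mulVec v)
          = ω ^ 2 * (v 0) ^ 2 + (b * v 0 + v 1) ^ 2 := by
        simp [dotProduct, Matrix.mulVec, Fin.sum_univ_two]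
        ring
      rw [hexp]
      rcases eq_or_ne (v 0) 0 with h0' | h0'
      · have h1 : v 1 ≠ 0 := by
          intro h1
          apply hv; ext i; fin_cases i <;> simp [h0', h1]
        rw [h0']
        have : v 1 ^ 2 > 0 := by positivity
        nlinarith
      · have : ω ^ 2 * (v 0) ^ 2 > 0 := by positivity
        nlinarith [sq_nonneg (b * v 0 + v 1)]
  · ext i j
    fin_cases i <;> fin_cases j <;>
      simp [Matrix.mul_apply, Fin.sum_univ_two, Matrix.transpose] <;> ring
  · intro v
    have hr : dotProduct v
        ((!![-2 * α * ω ^ 2 * (y₁ ^ 2 + k + η), 0; 0, 0] :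
            Matrix (Fin 2) (Fin 2) ℝ).mulVec v)
        = -(2 * α * ω ^ 2 * (y₁ ^ 2 + k + η) * (v 0) ^ 2) := by
      simp [dotProduct, Matrix.mulVec, Fin.sum_univ_two]
      ring
    rw [hr]
    have h2 : (0:ℝ) ≤ 2 * α * ω ^ 2 * (y₁ ^ 2 + k + η) * (v 0) ^ 2 :=
      mul_nonneg (mul_nonneg (by positivity) hq) (sq_nonneg _)
    linarith
end
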